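/- Let -1 < z < a < 1/2 and let p be the cubic polynomial with p(-1) = p(a) = -1, p(z) = p(1) = 1 given by p(x) = (x-z)(x-a)(x-1)/(2(1+z)(1+a)) - (x^2-1)(x-a)/((1-z^2)(z-a)) - (x^2-1)(x-z)/((1-a^2)(z-a)) + (x+1)(x-z)(x-a)/(2(1-z)(1-a)). If additionally p'(z) = 0, then p is strictly increasing on [-1, z] and strictly decreasing on [z, a]. -/

import Mathlib

set_option maxHeartbeats 2000000


theorem stmt_19 (a z : ℝ) (hz : -1 < z) (hza : z < a) (ha : a < 1/2)
    (p : ℝ → ℝ)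
    (hp : ∀ x, p x = (x - z)*(x - a)*(x - 1) / (2*(1 + z)*(1 + a))
        - (x^2 - 1)*(x - a) / ((1 - z^2)*(z - a))
        - (x^2 - 1)*(x - z) / ((1 - a^2)*(z - a))
        + (x + 1)*(x - z)*(x - a) / (2*(1 - z)*(1 - a)))
    (hcrit : deriv p z = 0) :
    StrictMonoOn p (Set.Icc (-1 : ℝ) z) ∧ StrictAntiOn p (Set.Icc z a) := by
  have ha1 : a < 1 := by linarith
  have hz1 : z < 1 := by linarith
  have hza' : -1 < a := by linarith
  have h1z : (0:ℝ) < 1 + z := by linarith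
  have h1a : (0:ℝ) < 1 + a := by linarith
  have hmz : (0:ℝ) < 1 - z := by linarith
  have hma : (0:ℝ) < 1 - a := by linarith
  have haz : (0:ℝ) < a - z := by linarith
  have hne1 : (2*(1 + z)*(1 + a)) ≠ 0 := by positivity
  have hne2 : ((1 - z^2)*(z - a)) ≠ 0 := by
    have : (0:ℝ) < 1 - z^2 := by nlinarith
    have h2 : z - a < 0 := by linarith
    exact mul_ne_zero (ne_of_gt this) (ne_of_lt h2)
  have hne3 : ((1 - a^2)*(z - a)) ≠ 0 := by
    have : (0:ℝ) < 1 - a^2 := by nlinarith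
    have h2 : z - a < 0 := by linarith
    exact mul_ne_zero (ne_of_gt this) (ne_of_lt h2)
  have hne4 : (2*(1 - z)*(1 - a)) ≠ 0 := by positivity
  have hpf : p = fun x => (x - z)*(x - a)*(x - 1) / (2*(1 + z)*(1 + a))
        - (x^2 - 1)*(x - a) / ((1 - z^2)*(z - a))
        - (x^2 - 1)*(x - z) / ((1 - a^2)*(z - a))
        + (x + 1)*(x - z)*(x - a) / (2*(1 - z)*(1 - a)) := funext hp
  -- derivative
  set E : ℝ → ℝ := fun x =>
      ((x - a)*(x - 1) + (x - z)*(x - 1) + (x - z)*(x - a)) / (2*(1 + z)*(1 + a))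
      - (2*x*(x - a) + (x^2 - 1)) / ((1 - z^2)*(z - a))
      - (2*x*(x - z) + (x^2 - 1)) / ((1 - a^2)*(z - a))
      + ((x - z)*(x - a) + (x + 1)*(x - a) + (x + 1)*(x - z)) / (2*(1 - z)*(1 - a))
    with hE
  have key : ∀ x : ℝ, HasDerivAt p (E x) x := by
    intro x
    rw [hpf]
    have hxz : HasDerivAt (fun x : ℝ => x - z) 1 x := (hasDerivAt_id x).sub_const z
    have hxa : HasDerivAt (fun x : ℝ => x - a) 1 x := (hasDerivAt_id x).sub_const a
    have hx1 : HasDerivAt (fun x : ℝ => x - 1) 1 x := (hasDerivAt_id x).sub_const 1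
    have hxp1 : HasDerivAt (fun x : ℝ => x + 1) 1 x := (hasDerivAt_id x).add_const 1
    have hsq : HasDerivAt (fun x : ℝ => x^2 - 1) (2*x) x := by
      simpa using (hasDerivAt_pow 2 x).sub_const 1
    have h1 := (((hxz.mul hxa).mul hx1).div_const (2*(1 + z)*(1 + a)))
    have h2 := ((hsq.mul hxa).div_const ((1 - z^2)*(z - a)))
    have h3 := ((hsq.mul hxz).div_const ((1 - a^2)*(z - a)))
    have h4 := (((hxp1.mul hxz).mul hxa).div_const (2*(1 - z)*(1 - a)))
    have := ((h1.sub h2).sub h3).add h4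
    convert this using 1
    · rfl
    · rfl
    · rfl
    rw [hE]
    simp only [Pi.mul_apply]
    ring
  have hderiv : ∀ x, deriv p x = E x := fun x => (key x).deriv
  -- the key algebraic identity
  have hDpos : (0:ℝ) < 4*(1 - z^2)^2*(1 - a^2)^2*(z - a)^2 := by
    have h5 : (z - a : ℝ) ≠ 0 := by intro h; nlinarith
    have h6 : (1 - z^2 : ℝ) > 0 := by nlinarith
    have h7 : (1 - a^2 : ℝ) > 0 := by nlinarith
    positivity
  have hId' : ∀ x : ℝ, E x * (4*(1 - z^2)^2*(1 - a^2)^2*(z - a)^2) =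
      ((x - z) * (4*((a - z)*(1 - a)*(1 + a)^2*(1 - z)^2*(1 + z))
          * (3*(2 + z - a)*x + (2*a^2 - 3*a*z - 2*a + z^2 + 4*z)))
        + (-4*(a - z)*(a - 1)*(a + 1)^2*(z - 1)^3*(z + 1))
          * (a^2 - 2*a - 2*a*z + z^2 + 4*z + 2)) := by
    intro x
    rw [hE]
    have d1 : (1 + z : ℝ) ≠ 0 := by positivity
    have d2 : (1 + a : ℝ) ≠ 0 := by positivity
    have d3 : (1 - z : ℝ) ≠ 0 := by positivity
    have d4 : (1 - a : ℝ) ≠ 0 := by positivity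
    have d5 : (z - a : ℝ) ≠ 0 := by intro h; nlinarith
    beta_reduce
    rw [div_sub_div _ _ hne1 hne2, div_sub_div _ _ (mul_ne_zero hne1 hne2) hne3, div_add_div _ _ (mul_ne_zero (mul_ne_zero hne1 hne2) hne3) hne4, div_mul_eq_mul_div, div_eq_iff (by positivity)]
    ring
  have hId : ∀ x : ℝ, E x =
      ((x - z) * (4*((a - z)*(1 - a)*(1 + a)^2*(1 - z)^2*(1 + z))
          * (3*(2 + z - a)*x + (2*a^2 - 3*a*z - 2*a + z^2 + 4*z)))
        + (-4*(a - z)*(a - 1)*(a + 1)^2*(z - 1)^3*(z + 1))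
          * (a^2 - 2*a - 2*a*z + z^2 + 4*z + 2))
      / (4*(1 - z^2)^2*(1 - a^2)^2*(z - a)^2) := by
    intro x
    rw [eq_div_iff (ne_of_gt hDpos)]
    exact hId' x
  -- derive G = 0 from the critical point condition
  have hEz : E z = 0 := by rw [← hderiv z]; exact hcrit
  have hMcpos : (0:ℝ) < 4*(a - z)*(1 - a)*(a + 1)^2*(1 - z)^3*(z + 1) := by
    have e1 : (0:ℝ) < a + 1 := by linarith
    have e2 : (0:ℝ) < z + 1 := by linarith
    exact mul_pos (mul_pos (mul_pos (mul_pos (mul_pos (by norm_num) haz) hma)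
      (pow_pos e1 2)) (pow_pos hmz 3)) e2
  have hMc : (-4*(a - z)*(a - 1)*(a + 1)^2*(z - 1)^3*(z + 1) : ℝ) < 0 := by
    have e3 : -4*(a - z)*(a - 1)*(a + 1)^2*(z - 1)^3*(z + 1)
        = -(4*(a - z)*(1 - a)*(a + 1)^2*(1 - z)^3*(z + 1)) := by ring
    rw [e3]
    exact neg_lt_zero.mpr hMcpos
  have hG : a^2 - 2*a - 2*a*z + z^2 + 4*z + 2 = 0 := by
    have h := hId z
    rw [hEz] at h
    have h2 : ((-4*(a - z)*(a - 1)*(a + 1)^2*(z - 1)^3*(z + 1))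
        * (a^2 - 2*a - 2*a*z + z^2 + 4*z + 2)) = 0 := by
      have := h.symm
      rw [div_eq_iff (ne_of_gt hDpos)] at this
      linarith [this]
    rcases mul_eq_zero.mp h2 with h3 | h3
    · exact absurd h3 (ne_of_lt hMc)
    · exact h3
  -- consequence: a + z < 0
  have hsum : a + z < 0 := by nlinarith [sq_nonneg (a - 1 - z), hG]
  -- clean derivative formula
  have hFp : (0:ℝ) < (a - z)*(1 - a)*(1 + a)^2*(1 - z)^2*(1 + z) :=
    mul_pos (mul_pos (mul_pos (mul_pos haz hma) (pow_pos h1a 2)) (pow_pos hmz 2)) h1z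
  have hEclean : ∀ x : ℝ, E x =
      (x - z) * (4*((a - z)*(1 - a)*(1 + a)^2*(1 - z)^2*(1 + z))
          * (3*(2 + z - a)*x + (2*a^2 - 3*a*z - 2*a + z^2 + 4*z)))
      / (4*(1 - z^2)^2*(1 - a^2)^2*(z - a)^2) := by
    intro x
    rw [hId x, hG, mul_zero, add_zero]
  -- linear factor negative for x < a
  have hq : ∀ x : ℝ, x < a → (3*(2 + z - a)*x + (2*a^2 - 3*a*z - 2*a + z^2 + 4*z)) < 0 := by
    intro x hx
    have hqa : (a + z)*(4 - a + z) < 0 :=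
      mul_neg_of_neg_of_pos hsum (by linarith)
    nlinarith [mul_pos (show (0:ℝ) < 2 + z - a by linarith) (show (0:ℝ) < a - x by linarith), hqa]
  have hcont : ContinuousOn p (Set.Icc (-1:ℝ) z) ∧ ContinuousOn p (Set.Icc z a) := by
    constructor <;> exact fun x _ => (key x).continuousAt.continuousWithinAt
  constructor
  · apply StrictMonoOn.mono (s := Set.Icc (-1:ℝ) z) ?_ (le_refl _)
    apply strictMonoOn_of_deriv_pos (convex_Icc _ _) hcont.1
    intro x hx
    rw [interior_Icc] at hx
    rw [hderiv x, hEclean x]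
    apply div_pos _ hDpos
    apply mul_pos_of_neg_of_neg
    · linarith [hx.2]
    · exact mul_neg_of_pos_of_neg (by linarith [hFp]) (hq x (by linarith [hx.2]))
  · apply strictAntiOn_of_deriv_neg (convex_Icc _ _) hcont.2
    intro x hx
    rw [interior_Icc] at hx
    rw [hderiv x, hEclean x]
    apply div_neg_of_neg_of_pos _ hDpos
    have h1 : (0:ℝ) < x - z := by linarith [hx.1]
    have h2 := mul_neg_of_pos_of_neg (show (0:ℝ) < 4*((a - z)*(1 - a)*(1 + a)^2*(1 - z)^2*(1 + z)) by linarith [hFp]) (hq x hx.2)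
    exact mul_neg_of_pos_of_neg h1 h2
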